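/- In the deterministic sampling elimination procedure applied to a periodic pattern p with period q, the set of copies that can never be distinguished from copy 0 consists exactly of the copies shifted by integer multiples of q: for any shift d with 0 ≤ d ≤ m/2, the shifted copy of p agrees with the unshifted copy on all commonly covered positions if and only if q divides d. -/
import Mathlib


/-- For a periodic pattern `p` with least period `q`, a shifted copy (shift
`d ≤ m/2`) agrees with the unshifted copy on all commonly covered positions if
and only if `q` divides `d`. -/
theorem shift_agrees_iff_period_dvd {α : Type*} {m : ℕ} (p : Fin m → α) (q : ℕ)
    (hq1 : 1 ≤ q) (hq2 : q ≤ m / 2)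
    (hper : ∀ k, ∀ hk : k < m, q ≤ k → ∀ h : k - q < m, p ⟨k, hk⟩ = p ⟨k - q, h⟩)
    (hleast : ∀ d, 1 ≤ d → d < q →
      ∃ k, ∃ hk : k < m, d ≤ k ∧ p ⟨k, hk⟩ ≠ p ⟨k - d, by omega⟩) :
    ∀ d, d ≤ m / 2 →
      ((∀ k, ∀ hk : k < m, d ≤ k → ∀ h : k - d < m, p ⟨k, hk⟩ = p ⟨k - d, h⟩)
        ↔ q ∣ d) := by
  have hmul : ∀ c, ∀ k, ∀ hk : k < m, q * c ≤ k → ∀ h : k - q * c < m,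
      p ⟨k, hk⟩ = p ⟨k - q * c, h⟩ := by
    intro c
    induction c with
    | zero => intro k hk _ h; exact congrArg p (Fin.mk_eq_mk.mpr (by omega))
    | succ c ih =>
      intro k hk hle h
      have hms : q * (c + 1) = q * c + q := Nat.mul_succ q c
      have hqk : q ≤ k := by omega
      have h1 : k - q < m := by omega
      rw [hper k hk hqk h1]
      have h2 : q * c ≤ k - q := by omega
      have h3 : k - q - q * c < m := by omega
      rw [ih (k - q) h1 h2 h3]
      exact congrArg p (Fin.mk_eq_mk.mpr (by omega))
  have forward : ∀ d, d ≤ m / 2 →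
      (∀ k, ∀ hk : k < m, d ≤ k → ∀ h : k - d < m, p ⟨k, hk⟩ = p ⟨k - d, h⟩) →
      q ∣ d := by
    intro d
    induction d using Nat.strong_induction_on with
    | _ d ih =>
      intro hd hag
      rcases Nat.lt_or_ge d q with hlt | hge
      · rcases Nat.eq_zero_or_pos d with rfl | hdpos
        · exact Nat.dvd_zero q
        · obtain ⟨k, hk, hdk, hne⟩ := hleast d hdpos hlt
          exact absurd (hag k hk hdk (by omega)) hne
      · -- d ≥ q : show the shift d - q also agrees
        have hsub : ∀ k, ∀ hk : k < m, d - q ≤ k → ∀ h : k - (d - q) < m,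
            p ⟨k, hk⟩ = p ⟨k - (d - q), h⟩ := by
          intro k hk hle h
          rcases Nat.lt_or_ge k d with hkd | hkd
          · have hkm : k + q < m := by omega
            have e1 : p ⟨k + q, hkm⟩ = p ⟨k, hk⟩ := by
              have := hper (k + q) hkm (by omega) (by omega)
              rw [this]; exact congrArg p (Fin.mk_eq_mk.mpr (by omega))
            have e2 : p ⟨k + q, hkm⟩ = p ⟨k + q - d, by omega⟩ :=
              hag (k + q) hkm (by omega) (by omega)
            rw [← e1, e2]; exact congrArg p (Fin.mk_eq_mk.mpr (by omega))
          · have e1 : p ⟨k, hk⟩ = p ⟨k - d, by omega⟩ := hag k hk hkd (by omega)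
            have e3 : p ⟨k - (d - q), h⟩ = p ⟨k - (d - q) - q, by omega⟩ :=
              hper _ h (by omega) (by omega)
            rw [e1, e3]; exact congrArg p (Fin.mk_eq_mk.mpr (by omega))
        obtain ⟨c, hc⟩ := ih (d - q) (by omega) (by omega) hsub
        refine ⟨c + 1, ?_⟩
        rw [Nat.mul_succ]; omega
  intro d hd
  constructor
  · exact forward d hd
  · rintro ⟨c, rfl⟩
    exact hmul c
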